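/- A consistent set of literals S is an answer set of a logic program P (i.e., there is a generating set R of P with head(R) = S) if and only if there exists a stable fragment set E of P with head of the union of E equal to S. -/

import Mathlib

/-- A literal over atoms `A`: `(true, a)` is the atom `a`, `(false, a)` is `¬ a`. -/
abbrev Lit (A : Type) := Bool × A

/-- A rule with head, positive body and negative body. -/
structure Rule (A : Type) where
  head : Lit A
  pos : Set (Lit A)
  neg : Set (Lit A)

variable {A : Type}

/-- Heads of a set of rules. -/
def headSet (R : Set (Rule A)) : Set (Lit A) := Rule.head '' R

/-- `R ⊆ P` positively satisfies `P`. -/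
def PosSat (P R : Set (Rule A)) : Prop :=
  R ⊆ P ∧ ∀ r ∈ P, r.pos ⊆ headSet R → r ∈ R

/-- The minimal set of rules positively satisfying `P`. -/
def MP (P : Set (Rule A)) : Set (Rule A) := ⋂₀ {R | PosSat P R}

/-- A set of rules defeats a rule. -/
def defeatsRule (R : Set (Rule A)) (r : Rule A) : Prop :=
  (headSet R ∩ r.neg).Nonempty

/-- A set of rules defeats a set of rules. -/
def defeatsSet (R₁ R₂ : Set (Rule A)) : Prop := ∃ r ∈ R₂, defeatsRule R₁ r

/-- The reduct `P^R` removes each rule defeated by `R`. -/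
def reduct (P R : Set (Rule A)) : Set (Rule A) := {r ∈ P | ¬ defeatsRule R r}

/-- `R ⊆ P` is a generating set of `P` iff `R = MP (P^R)`. -/
def GenSet (P R : Set (Rule A)) : Prop := R ⊆ P ∧ R = MP (reduct P R)

/-- A set of literals is consistent iff it contains no complementary pair. -/
def Consistent (S : Set (Lit A)) : Prop :=
  ∀ a : A, ¬ (((true, a) ∈ S) ∧ ((false, a) ∈ S))

/-- Answer sets via generating sets. -/
def AnswerSet (P : Set (Rule A)) (S : Set (Lit A)) : Prop :=
  Consistent S ∧ ∃ R, GenSet P R ∧ headSet R = S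

/-- `Γ_S(P)`: rules whose positive body is in `S` and negative body disjoint from `S`. -/
def Gamma (S : Set (Lit A)) (P : Set (Rule A)) : Set (Rule A) :=
  {r ∈ P | r.pos ⊆ S ∧ r.neg ∩ S = ∅}

/-- Fragments of a program. -/
def Frag (P : Set (Rule A)) : Set (Set (Rule A)) := {R | R ⊆ P ∧ MP R = R}

/-- Fragment reduct: remove fragments defeated by a member of `E`. -/
def fragReduct (P : Set (Rule A)) (E : Set (Set (Rule A))) : Set (Set (Rule A)) :=
  {X ∈ Frag P | ¬ ∃ Y ∈ E, defeatsSet Y X}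

/-- Stable fragment sets. -/
def StableFragSet (P : Set (Rule A)) (E : Set (Set (Rule A))) : Prop :=
  E ⊆ Frag P ∧ fragReduct P E = E

/-- Mutually defeating (conflicting) sets of rules. -/
def Conflicting (X Y : Set (Rule A)) : Prop := defeatsSet X Y ∧ defeatsSet Y X

/-- `X` overrides `Y` w.r.t. the preference relation `lt`. -/
def Overrides (lt : Rule A → Rule A → Prop) (X Y : Set (Rule A)) : Prop :=
  Conflicting X Y ∧
    ∀ r₁ ∈ X, defeatsRule Y r₁ → ∃ r₂ ∈ Y, defeatsRule X r₂ ∧ lt r₂ r₁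

/-- Preferred fragment reduct (semantics G). -/
def prefFragReduct (lt : Rule A → Rule A → Prop) (P : Set (Rule A))
    (E : Set (Set (Rule A))) : Set (Set (Rule A)) :=
  {X ∈ Frag P | ¬ ∃ Y ∈ E, defeatsSet Y X ∧ ¬ Overrides lt X Y}

/-- Preferred stable fragment sets (semantics G). -/
def PrefStableFragSet (lt : Rule A → Rule A → Prop) (P : Set (Rule A))
    (E : Set (Set (Rule A))) : Prop :=
  E ⊆ Frag P ∧ prefFragReduct lt P E = E

/-- Preferred answer sets under the fragment-based semantics G. -/
def GPrefAnswerSet (lt : Rule A → Rule A → Prop) (P : Set (Rule A))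
    (S : Set (Lit A)) : Prop :=
  Consistent S ∧ ∃ E, PrefStableFragSet lt P E ∧ headSet (⋃₀ E) = S

/-- `T(r,R)` for semantics GNO. -/
def Trules (lt : Rule A → Rule A → Prop) (r : Rule A) (R : Set (Rule A)) :
    Set (Rule A) :=
  MP {p ∈ R | ¬ lt p r}

/-- GNO reduct: remove rules `r` with `body⁻(r) ∩ head(T(r,R)) ≠ ∅`. -/
def gnoReduct (lt : Rule A → Rule A → Prop) (P R : Set (Rule A)) : Set (Rule A) :=
  {r ∈ P | ¬ (r.neg ∩ headSet (Trules lt r R)).Nonempty}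

/-- GNO-preferred generating sets. -/
def GNOPrefGen (lt : Rule A → Rule A → Prop) (P R : Set (Rule A)) : Prop :=
  GenSet P R ∧ R = MP (gnoReduct lt P R)

/-- GNO-preferred answer sets. -/
def GNOPrefAnswerSet (lt : Rule A → Rule A → Prop) (P : Set (Rule A))
    (S : Set (Lit A)) : Prop :=
  Consistent S ∧ ∃ R, GNOPrefGen lt P R ∧ headSet R = S

/-- A rule defeats a rule. -/
def defeats (r₁ r₂ : Rule A) : Prop := r₁.head ∈ r₂.neg

/-- `r₁` directly overrides `r₂` w.r.t. `lt`. -/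
def DirOverrides (lt : Rule A → Rule A → Prop) (r₁ r₂ : Rule A) : Prop :=
  (defeats r₁ r₂ ∧ defeats r₂ r₁) ∧ lt r₂ r₁

/-- D-reduct for the direct-conflict semantics. -/
def dReduct (lt : Rule A → Rule A → Prop) (P R : Set (Rule A)) : Set (Rule A) :=
  {r₁ ∈ P | ¬ ∃ r₂ ∈ R, defeats r₂ r₁ ∧ ¬ DirOverrides lt r₁ r₂}

/-- D-preferred generating sets. -/
def DPrefGen (lt : Rule A → Rule A → Prop) (P R : Set (Rule A)) : Prop :=
  R = MP (dReduct lt P R)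

/-- D-preferred answer sets. -/
def DPrefAnswerSet (lt : Rule A → Rule A → Prop) (P : Set (Rule A))
    (S : Set (Lit A)) : Prop :=
  Consistent S ∧ ∃ R, DPrefGen lt P R ∧ headSet R = S

/-- Stratified programs. -/
def Stratified (P : Set (Rule A)) : Prop :=
  ∃ lam : Lit A → ℕ, ∀ r ∈ P,
    (∀ l ∈ r.pos, lam l ≤ lam r.head) ∧ (∀ l ∈ r.neg, lam l < lam r.head)

lemma headSet_mono {R R' : Set (Rule A)} (h : R ⊆ R') : headSet R ⊆ headSet R' :=
  Set.image_mono h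

lemma MP_subset (Q : Set (Rule A)) : MP Q ⊆ Q :=
  Set.sInter_subset_of_mem ⟨subset_rfl, fun r hr _ => hr⟩

lemma posSat_MP (Q : Set (Rule A)) : PosSat Q (MP Q) := by
  refine ⟨MP_subset Q, fun r hr hpos => ?_⟩
  rw [MP, Set.mem_sInter]
  intro R hR
  exact hR.2 r hr (hpos.trans (headSet_mono (Set.sInter_subset_of_mem hR)))

lemma frag_subset_MP {X Q : Set (Rule A)} (hXQ : X ⊆ Q) (hX : MP X = X) :
    X ⊆ MP Q := by
  intro r hr
  rw [MP, Set.mem_sInter]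
  intro R' hR'
  have hsat : PosSat X (X ∩ R') :=
    ⟨Set.inter_subset_left, fun s hsX hpos =>
      ⟨hsX, hR'.2 s (hXQ hsX) (hpos.trans (headSet_mono Set.inter_subset_right))⟩⟩
  have : X ⊆ X ∩ R' := by
    conv_lhs => rw [← hX]
    exact Set.sInter_subset_of_mem hsat
  exact (this hr).2

lemma MP_idem (Q : Set (Rule A)) : MP (MP Q) = MP Q := by
  refine Set.Subset.antisymm (MP_subset _) ?_
  intro r hr
  rw [MP, Set.mem_sInter]
  intro R' hR'
  have hsat : PosSat Q R' :=
    ⟨hR'.1.trans (MP_subset Q), fun s hs hpos =>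
      hR'.2 s ((posSat_MP Q).2 s hs (hpos.trans (headSet_mono hR'.1))) hpos⟩
  exact Set.sInter_subset_of_mem hsat hr

/-- a consistent set of literals `S` is an answer set of `P` iff there
is a stable fragment set `E` of `P` with `head(⋃₀ E) = S`. -/
theorem answerSet_iff_stableFragSet (P : Set (Rule A)) (hP : P.Finite)
    (S : Set (Lit A)) (hS : Consistent S) :
    (∃ R, GenSet P R ∧ headSet R = S) ↔
      (∃ E, StableFragSet P E ∧ headSet (⋃₀ E) = S) := by
  constructor
  · rintro ⟨R, ⟨hRP, hRfix⟩, rfl⟩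
    have hRfrag : MP R = R := by
      conv_lhs => rw [hRfix, MP_idem]
      exact hRfix.symm
    have hRred : R ⊆ reduct P R := by
      conv_lhs => rw [hRfix]
      exact MP_subset _
    refine ⟨{X | X ∈ Frag P ∧ X ⊆ R}, ⟨fun X hX => hX.1, ?_⟩, ?_⟩
    · ext X
      constructor
      · rintro ⟨hXfrag, hnod⟩
        refine ⟨hXfrag, ?_⟩
        have hXred : X ⊆ reduct P R := by
          intro r hrX
          refine ⟨hXfrag.1 hrX, fun hdef => ?_⟩
          exact hnod ⟨R, ⟨⟨hRP, hRfrag⟩, subset_rfl⟩, r, hrX, hdef⟩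
        have := frag_subset_MP hXred hXfrag.2
        rwa [← hRfix] at this
      · rintro ⟨hXfrag, hXR⟩
        refine ⟨hXfrag, ?_⟩
        rintro ⟨Y, ⟨_, hYR⟩, r, hrX, hdef⟩
        exact (hRred (hXR hrX)).2 (hdef.mono (Set.inter_subset_inter_left _
          (headSet_mono hYR)))
    · have : ⋃₀ {X | X ∈ Frag P ∧ X ⊆ R} = R :=
        Set.Subset.antisymm (Set.sUnion_subset fun X hX => hX.2)
          (Set.subset_sUnion_of_mem ⟨⟨hRP, hRfrag⟩, subset_rfl⟩)
      rw [this]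
  · rintro ⟨E, ⟨hEF, hEfix⟩, rfl⟩
    set R := ⋃₀ E with hR
    have hund : ∀ X ∈ E, ¬ ∃ Y ∈ E, defeatsSet Y X := by
      intro X hX
      rw [← hEfix] at hX
      exact hX.2
    have hRP : R ⊆ P := Set.sUnion_subset fun X hX => (hEF hX).1
    have hRred : R ⊆ reduct P R := by
      rintro r ⟨X, hXE, hrX⟩
      refine ⟨(hEF hXE).1 hrX, fun hdef => ?_⟩
      obtain ⟨l, hlhead, hlneg⟩ := hdef
      obtain ⟨s, hsR, rfl⟩ := hlhead
      obtain ⟨Y, hYE, hsY⟩ := hsR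
      exact hund X hXE ⟨Y, hYE, r, hrX, ⟨s.head, ⟨s, hsY, rfl⟩, hlneg⟩⟩
    refine ⟨R, ⟨hRP, ?_⟩, rfl⟩
    refine Set.Subset.antisymm ?_ ?_
    · exact Set.sUnion_subset fun X hX =>
        frag_subset_MP ((Set.subset_sUnion_of_mem hX).trans hRred) (hEF hX).2
    · have hMfrag : MP (reduct P R) ∈ Frag P :=
        ⟨(MP_subset _).trans (fun r hr => hr.1), MP_idem _⟩
      have hM : MP (reduct P R) ∈ E := by
        rw [← hEfix]
        refine ⟨hMfrag, ?_⟩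
        rintro ⟨Y, hYE, r, hrM, hdef⟩
        exact (MP_subset _ hrM).2 (hdef.mono (Set.inter_subset_inter_left _
          (headSet_mono (Set.subset_sUnion_of_mem hYE))))
      exact Set.subset_sUnion_of_mem hM
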